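/- Given a finite metric space (X,d) with ordered points x_1,...,x_n, there exists an embedding f : X → ℓ_∞ that is non-expansive, has prioritized contractive distortion 2⌈log_2 j⌉ (i.e., for j < i, ‖f(x_j)-f(x_i)‖_∞ ≥ d(x_j,x_i)/(2⌈log_2 j⌉) for j ≥ 2, and ‖f(x_1)-f(x_i)‖_∞ ≥ d(x_1,x_i)/2), and prioritized dimension at most 2j (f(x_j) is supported on the first 2j coordinates, up to constants). -/

import Mathlib

open Finset

section StmtAux

variable {X : Type*} [MetricSpace X]

/-- index set for coordinate `m+1` (for `m ≥ 2`). -/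
def embSet (m : ℕ) : Finset ℕ := insert m (Finset.Icc 1 (2 ^ (Nat.clog 2 m - 1)))

lemma embSet_nonempty (m : ℕ) : (embSet m).Nonempty := ⟨m, Finset.mem_insert_self _ _⟩

noncomputable def emb (x : ℕ → X) (y : X) (k : ℕ) : ℝ :=
  if k = 0 then 0
  else if k = 1 then dist y (x 1)
  else if k = 2 then dist y (x 2)
  else (embSet (k - 1)).inf' (embSet_nonempty _) (fun a => dist y (x a))

lemma emb_coord (x : ℕ → X) (y : X) (m : ℕ) (hm : 2 ≤ m) :
    emb x y (m + 1) = (embSet m).inf' (embSet_nonempty _) (fun a => dist y (x a)) := by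
  have h0 : m + 1 ≠ 0 := by omega
  have h1 : m + 1 ≠ 1 := by omega
  have h2 : m + 1 ≠ 2 := by omega
  simp only [emb, h0, h1, h2, if_false, Nat.add_sub_cancel]

lemma emb_le_of_mem (x : ℕ → X) (y : X) {m a : ℕ} (hm : 2 ≤ m) (ha : a ∈ embSet m) :
    emb x y (m + 1) ≤ dist y (x a) := by
  rw [emb_coord x y m hm]
  exact Finset.inf'_le _ ha

lemma emb_nonneg (x : ℕ → X) (y : X) (k : ℕ) : 0 ≤ emb x y k := by
  unfold emb
  split_ifs
  · exact le_rfl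
  · exact dist_nonneg
  · exact dist_nonneg
  · exact Finset.le_inf' _ _ (fun a _ => dist_nonneg)

lemma emb_self_mem (x : ℕ → X) {m a : ℕ} (hm : 2 ≤ m) (ha : a ∈ embSet m) :
    emb x (x a) (m + 1) = 0 :=
  le_antisymm (by simpa using emb_le_of_mem x (x a) hm ha) (emb_nonneg _ _ _)

lemma emb_lip (x : ℕ → X) (y z : X) (k : ℕ) : |emb x y k - emb x z k| ≤ dist y z := by
  unfold emb
  split_ifs with h0 h1 h2
  · simpa using dist_nonneg
  · exact abs_dist_sub_le _ _ _
  · exact abs_dist_sub_le _ _ _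
  · rw [abs_sub_le_iff]
    constructor
    · obtain ⟨a, ha, he⟩ := Finset.exists_mem_eq_inf' (embSet_nonempty (k-1))
        (fun a => dist z (x a))
      rw [he]
      have h3 := Finset.inf'_le (fun a => dist y (x a)) ha
      have h4 := dist_triangle y z (x a)
      linarith
    · obtain ⟨a, ha, he⟩ := Finset.exists_mem_eq_inf' (embSet_nonempty (k-1))
        (fun a => dist y (x a))
      rw [he]
      have h3 := Finset.inf'_le (fun a => dist z (x a)) ha
      have h4 := dist_triangle z y (x a)
      rw [dist_comm z y] at h4
      linarith

/-- the exact-coordinate case: `x m` for `m = 1, 2` has an exact coordinate. -/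
lemma exact_case (x : ℕ → X) (u v : X) {m : ℕ} (c Δ : ℝ)
    (hm : m = 1 ∨ m = 2) (hc : dist u (x m) ≤ c) (h : 2 * c + Δ ≤ dist u v) :
    ∃ k, Δ ≤ |emb x u k - emb x v k| := by
  refine ⟨m, ?_⟩
  have hu : emb x u m = dist u (x m) := by rcases hm with rfl | rfl <;> simp [emb]
  have hv : emb x v m = dist v (x m) := by rcases hm with rfl | rfl <;> simp [emb]
  have htri : dist u v ≤ dist u (x m) + dist v (x m) := by
    have := dist_triangle u (x m) v
    rw [dist_comm (x m) v] at this; linarith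
  have : Δ ≤ emb x v m - emb x u m := by rw [hu, hv]; linarith
  calc Δ ≤ emb x v m - emb x u m := this
    _ ≤ |emb x v m - emb x u m| := le_abs_self _
    _ = |emb x u m - emb x v m| := abs_sub_comm _ _

lemma descent (x : ℕ → X) (Δ : ℝ) (hΔ : 0 < Δ) :
    ∀ q : ℕ, ∀ (u v : X) (m : ℕ) (c : ℝ), 1 ≤ m → m ≤ 2 ^ (q + 1) → 0 ≤ c →
      dist u (x m) ≤ c → 2 * c + (2 * (q : ℝ) + 1) * Δ ≤ dist u v →
      ∃ k, Δ ≤ |emb x u k - emb x v k| := by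
  intro q
  induction q with
  | zero =>
    intro u v m c hm1 hm2 hc0 hc hd
    have hm : m = 1 ∨ m = 2 := by
      have h2 : (2:ℕ) ^ (0 + 1) = 2 := by norm_num
      omega
    exact exact_case x u v c Δ hm hc (by push_cast at hd; linarith)
  | succ q ih =>
    intro u v m c hm1 hm2 hc0 hc hd
    have hq0 : (0 : ℝ) ≤ (q : ℝ) := Nat.cast_nonneg q
    push_cast at hd
    by_cases hsmall : m ≤ 2
    · have hm : m = 1 ∨ m = 2 := by omega
      exact exact_case x u v c Δ hm hc (by nlinarith)
    · push_neg at hsmall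
      have hm2' : 2 ≤ m := by omega
      have h1 : emb x u (m + 1) ≤ c :=
        le_trans (emb_le_of_mem x u hm2' (Finset.mem_insert_self _ _)) hc
      by_cases hbig : c + Δ ≤ emb x v (m + 1)
      · refine ⟨m + 1, ?_⟩
        calc Δ ≤ emb x v (m+1) - emb x u (m+1) := by linarith
          _ ≤ |emb x v (m+1) - emb x u (m+1)| := le_abs_self _
          _ = |emb x u (m+1) - emb x v (m+1)| := abs_sub_comm _ _
      · push_neg at hbig
        rw [emb_coord x v m hm2'] at hbig
        obtain ⟨a, ha, hlt⟩ := (Finset.inf'_lt_iff _).1 hbig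
        rcases Finset.mem_insert.1 ha with rfl | haI
        · exfalso
          have htri : dist u v ≤ dist u (x a) + dist v (x a) := by
            have := dist_triangle u (x a) v
            rw [dist_comm (x a) v] at this; linarith
          nlinarith
        · obtain ⟨ha1, ha2⟩ := Finset.mem_Icc.1 haI
          have hclog : Nat.clog 2 m ≤ q + 2 := (Nat.clog_le_iff_le_pow (by norm_num)).2 hm2
          have ha2' : a ≤ 2 ^ (q + 1) :=
            le_trans ha2 (Nat.pow_le_pow_right (by norm_num) (by omega))
          obtain ⟨k, hk⟩ := ih v u a (c + Δ) ha1 ha2' (by linarith) (le_of_lt hlt)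
            (by rw [dist_comm]; linarith)
          exact ⟨k, by rw [abs_sub_comm]; exact hk⟩

end StmtAux

theorem stmt5 (X : Type*) [MetricSpace X] (n : ℕ) (x : ℕ → X) :
    ∃ f : X → ℕ → ℝ,
      (∀ y z : X, ∀ k : ℕ, |f y k - f z k| ≤ dist y z)
      ∧ (∀ j i, 2 ≤ j → j < i → i ≤ n →
          ∃ k, dist (x j) (x i) / (2 * Nat.clog 2 j) ≤ |f (x j) k - f (x i) k|)
      ∧ (∀ i, 1 < i → i ≤ n →
          ∃ k, dist (x 1) (x i) / 2 ≤ |f (x 1) k - f (x i) k|)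
      ∧ (∀ j k, 1 ≤ j → j ≤ n → 2 * j < k → f (x j) k = 0) := by
  refine ⟨emb x, fun y z k => emb_lip x y z k, ?_, ?_, ?_⟩
  · -- contraction
    intro j i h2j hji hin
    set d := dist (x j) (x i) with hd
    have hd0 : 0 ≤ d := dist_nonneg
    rcases eq_or_lt_of_le hd0 with hdz | hdpos
    · refine ⟨0, ?_⟩
      have h0 : ∀ y : X, emb x y 0 = 0 := fun y => by simp [emb]
      rw [h0, h0, sub_zero, abs_zero, hdz.symm]
      simp
    rcases eq_or_lt_of_le h2j with rfl | hj3
    · -- j = 2 : coordinate 2 is exact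
      refine ⟨2, ?_⟩
      have h1 : emb x (x 2) 2 = 0 := by simp [emb]
      have h2 : emb x (x i) 2 = dist (x i) (x 2) := by simp [emb]
      rw [h1, h2, dist_comm (x i) (x 2), ← hd]
      have hc : Nat.clog 2 2 = 1 := by norm_num [Nat.clog]
      rw [hc]
      rw [abs_sub_comm, sub_zero, abs_of_nonneg hd0]
      push_cast
      linarith
    · -- j ≥ 3
      have hj3' : 3 ≤ j := hj3
      set p := Nat.clog 2 j with hp
      have hp2 : 2 ≤ p := by
        by_contra h
        push_neg at h
        have : j ≤ 2 ^ 1 := (Nat.clog_le_iff_le_pow (by norm_num)).1 (by omega)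
        omega
      have hpR : (2 : ℝ) ≤ (p : ℝ) := by exact_mod_cast hp2
      set Δ : ℝ := d / (2 * p) with hΔdef
      have hΔpos : 0 < Δ := by
        apply div_pos hdpos; positivity
      have hdΔ : d = 2 * (p : ℝ) * Δ := by
        rw [hΔdef]; field_simp
      -- coordinate j+1
      have hj2 : 2 ≤ j := h2j
      have hjz : emb x (x j) (j + 1) = 0 :=
        emb_self_mem x hj2 (Finset.mem_insert_self _ _)
      by_cases hbig : Δ ≤ emb x (x i) (j + 1)
      · refine ⟨j + 1, ?_⟩
        rw [hjz, zero_sub, abs_neg, abs_of_nonneg (emb_nonneg _ _ _)]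
        calc d / (2 * (p:ℝ)) = Δ := rfl
          _ ≤ emb x (x i) (j+1) := hbig
      · push_neg at hbig
        rw [emb_coord x (x i) j hj2] at hbig
        obtain ⟨a, ha, hlt⟩ := (Finset.inf'_lt_iff _).1 hbig
        rcases Finset.mem_insert.1 ha with rfl | haI
        · exfalso
          rw [dist_comm (x i) (x a), ← hd] at hlt
          nlinarith
        · obtain ⟨ha1, ha2⟩ := Finset.mem_Icc.1 haI
          have hq : p - 1 = (p - 2) + 1 := by omega
          have ha2' : a ≤ 2 ^ ((p - 2) + 1) := by rw [← hq]; exact ha2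
          have hcast : ((p - 2 : ℕ) : ℝ) = (p : ℝ) - 2 := by
            push_cast [Nat.cast_sub hp2]; ring
          obtain ⟨k, hk⟩ := descent x Δ hΔpos (p - 2) (x i) (x j) a Δ ha1 ha2'
            (le_of_lt hΔpos) (le_of_lt hlt)
            (by rw [dist_comm (x i) (x j), ← hd, hcast]; nlinarith)
          refine ⟨k, ?_⟩
          rw [abs_sub_comm]
          calc d / (2 * (p:ℝ)) = Δ := rfl
            _ ≤ |emb x (x i) k - emb x (x j) k| := hk
  · -- the j = 1 case
    intro i h1 hn
    refine ⟨1, ?_⟩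
    have ha : emb x (x 1) 1 = 0 := by simp [emb]
    have hb : emb x (x i) 1 = dist (x i) (x 1) := by simp [emb]
    rw [ha, hb, zero_sub, abs_neg, abs_of_nonneg dist_nonneg, dist_comm (x i) (x 1)]
    linarith [dist_nonneg (x := x 1) (y := x i)]
  · -- support
    intro j k hj1 hjn hk
    have hk3 : 3 ≤ k := by omega
    have hm2 : 2 ≤ k - 1 := by omega
    have hkk : k = (k - 1) + 1 := by omega
    have hχ : 1 ≤ Nat.clog 2 (k - 1) := Nat.clog_pos (by norm_num) (by omega)
    have hmem : j ∈ embSet (k - 1) := by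
      apply Finset.mem_insert_of_mem
      rw [Finset.mem_Icc]
      refine ⟨hj1, ?_⟩
      have h1 : k - 1 ≤ 2 ^ (Nat.clog 2 (k - 1)) := Nat.le_pow_clog (by norm_num) _
      have h2 : 2 ^ (Nat.clog 2 (k - 1)) = 2 * 2 ^ (Nat.clog 2 (k - 1) - 1) := by
        rw [← pow_succ']
        congr 1
        omega
      omega
    rw [hkk]
    exact emb_self_mem x hm2 hmem
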